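/- There exists κ > 0, depending only on c1, c2, σ0, σ1, such that for every Φ ∈ ℝ⁴ with |Φ| < 2κ one has a(Φ) > b(Φ) > 0 and a(Φ)b(Φ) > c(Φ)², and the eigenvalues of A(Φ) are real, distinct and ordered: λ4(Φ) < λ3(Φ) < λ2(Φ) < λ1(Φ) (strict hyperbolicity). Moreover at Φ = 0 one has λ1(0) = c1 and λ2(0) = c2. -/

import Mathlib

noncomputable section

open Real Matrix Set

namespace ElasticIP

/-- Euclidean norm on `ℝ⁴` (presented as `Fin 4 → ℝ`). -/
def eucNorm4 (Φ : Fin 4 → ℝ) : ℝ := Real.sqrt (∑ i, (Φ i) ^ 2)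

/-- `a(Φ) = c₁² + 2σ₀φ₁`. -/
def aF (c1 σ0 : ℝ) (Φ : Fin 4 → ℝ) : ℝ := c1 ^ 2 + 2 * σ0 * Φ 0

/-- `b(Φ) = c₂² + 2σ₁φ₁`. -/
def bF (c2 σ1 : ℝ) (Φ : Fin 4 → ℝ) : ℝ := c2 ^ 2 + 2 * σ1 * Φ 0

/-- `c(Φ) = 2σ₁φ₂`. -/
def cF (σ1 : ℝ) (Φ : Fin 4 → ℝ) : ℝ := 2 * σ1 * Φ 1

/-- `Δ = (a-b)² + 4c²`. -/
def ΔF (c1 c2 σ0 σ1 : ℝ) (Φ : Fin 4 → ℝ) : ℝ :=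
  (aF c1 σ0 Φ - bF c2 σ1 Φ) ^ 2 + 4 * cF σ1 Φ ^ 2

/-- The coefficient matrix `A(Φ)` of the first-order system. -/
def AM (c1 c2 σ0 σ1 : ℝ) (Φ : Fin 4 → ℝ) : Matrix (Fin 4) (Fin 4) ℝ :=
  !![0, 0, -1, 0;
     0, 0, 0, -1;
     -aF c1 σ0 Φ, -cF σ1 Φ, 0, 0;
     -cF σ1 Φ, -bF c2 σ1 Φ, 0, 0]

/-- `λ₁ = √(((a+b)+√Δ)/2)`. -/
def lam1 (c1 c2 σ0 σ1 : ℝ) (Φ : Fin 4 → ℝ) : ℝ :=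
  Real.sqrt ((aF c1 σ0 Φ + bF c2 σ1 Φ + Real.sqrt (ΔF c1 c2 σ0 σ1 Φ)) / 2)

/-- `λ₂ = √(((a+b)-√Δ)/2)`. -/
def lam2 (c1 c2 σ0 σ1 : ℝ) (Φ : Fin 4 → ℝ) : ℝ :=
  Real.sqrt ((aF c1 σ0 Φ + bF c2 σ1 Φ - Real.sqrt (ΔF c1 c2 σ0 σ1 Φ)) / 2)

/-- `λ₃ = -λ₂`. -/
def lam3 (c1 c2 σ0 σ1 : ℝ) (Φ : Fin 4 → ℝ) : ℝ := - lam2 c1 c2 σ0 σ1 Φ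

/-- `λ₄ = -λ₁`. -/
def lam4 (c1 c2 σ0 σ1 : ℝ) (Φ : Fin 4 → ℝ) : ℝ := - lam1 c1 c2 σ0 σ1 Φ

/-- Right eigenvector `r₁`. -/
def r1 (c1 c2 σ0 σ1 : ℝ) (Φ : Fin 4 → ℝ) : Fin 4 → ℝ :=
  ![(lam1 c1 c2 σ0 σ1 Φ ^ 2 - bF c2 σ1 Φ) / (2 * σ1),
    Φ 1,
    -(lam1 c1 c2 σ0 σ1 Φ * (lam1 c1 c2 σ0 σ1 Φ ^ 2 - bF c2 σ1 Φ)) / (2 * σ1),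
    -(lam1 c1 c2 σ0 σ1 Φ) * Φ 1]

/-- Right eigenvector `r₂`. -/
def r2 (c1 c2 σ0 σ1 : ℝ) (Φ : Fin 4 → ℝ) : Fin 4 → ℝ :=
  ![(lam2 c1 c2 σ0 σ1 Φ ^ 2 - bF c2 σ1 Φ) / (2 * σ1),
    Φ 1,
    -(lam2 c1 c2 σ0 σ1 Φ * (lam2 c1 c2 σ0 σ1 Φ ^ 2 - bF c2 σ1 Φ)) / (2 * σ1),
    -(lam2 c1 c2 σ0 σ1 Φ) * Φ 1]

/-- Right eigenvector `r₃`. -/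
def r3 (c1 c2 σ0 σ1 : ℝ) (Φ : Fin 4 → ℝ) : Fin 4 → ℝ :=
  ![(lam2 c1 c2 σ0 σ1 Φ ^ 2 - bF c2 σ1 Φ) / (2 * σ1),
    Φ 1,
    lam2 c1 c2 σ0 σ1 Φ * (lam2 c1 c2 σ0 σ1 Φ ^ 2 - bF c2 σ1 Φ) / (2 * σ1),
    lam2 c1 c2 σ0 σ1 Φ * Φ 1]

/-- Right eigenvector `r₄`. -/
def r4 (c1 c2 σ0 σ1 : ℝ) (Φ : Fin 4 → ℝ) : Fin 4 → ℝ :=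
  ![(lam1 c1 c2 σ0 σ1 Φ ^ 2 - bF c2 σ1 Φ) / (2 * σ1),
    Φ 1,
    lam1 c1 c2 σ0 σ1 Φ * (lam1 c1 c2 σ0 σ1 Φ ^ 2 - bF c2 σ1 Φ) / (2 * σ1),
    lam1 c1 c2 σ0 σ1 Φ * Φ 1]

/-- `K = (Δ + (a-b)√Δ)/(4σ₁²)`. -/
def KF (c1 c2 σ0 σ1 : ℝ) (Φ : Fin 4 → ℝ) : ℝ :=
  (ΔF c1 c2 σ0 σ1 Φ + (aF c1 σ0 Φ - bF c2 σ1 Φ) * Real.sqrt (ΔF c1 c2 σ0 σ1 Φ)) / (4 * σ1 ^ 2)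

/-- `N = (Δ - (a-b)√Δ)/(4σ₁²)`. -/
def NF (c1 c2 σ0 σ1 : ℝ) (Φ : Fin 4 → ℝ) : ℝ :=
  (ΔF c1 c2 σ0 σ1 Φ - (aF c1 σ0 Φ - bF c2 σ1 Φ) * Real.sqrt (ΔF c1 c2 σ0 σ1 Φ)) / (4 * σ1 ^ 2)

/-- Left eigenvector `l₁`. -/
def l1 (c1 c2 σ0 σ1 : ℝ) (Φ : Fin 4 → ℝ) : Fin 4 → ℝ :=
  (KF c1 c2 σ0 σ1 Φ)⁻¹ •
    ![(lam1 c1 c2 σ0 σ1 Φ ^ 2 - bF c2 σ1 Φ) / (2 * σ1),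
      Φ 1,
      -((lam1 c1 c2 σ0 σ1 Φ ^ 2 - bF c2 σ1 Φ) / (2 * σ1 * lam1 c1 c2 σ0 σ1 Φ)),
      -(Φ 1 / lam1 c1 c2 σ0 σ1 Φ)]

/-- Left eigenvector `l₂`. -/
def l2 (c1 c2 σ0 σ1 : ℝ) (Φ : Fin 4 → ℝ) : Fin 4 → ℝ :=
  (NF c1 c2 σ0 σ1 Φ)⁻¹ •
    ![(lam2 c1 c2 σ0 σ1 Φ ^ 2 - bF c2 σ1 Φ) / (2 * σ1),
      Φ 1,
      -((lam2 c1 c2 σ0 σ1 Φ ^ 2 - bF c2 σ1 Φ) / (2 * σ1 * lam2 c1 c2 σ0 σ1 Φ)),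
      -(Φ 1 / lam2 c1 c2 σ0 σ1 Φ)]

/-- Left eigenvector `l₃`. -/
def l3 (c1 c2 σ0 σ1 : ℝ) (Φ : Fin 4 → ℝ) : Fin 4 → ℝ :=
  (NF c1 c2 σ0 σ1 Φ)⁻¹ •
    ![(lam2 c1 c2 σ0 σ1 Φ ^ 2 - bF c2 σ1 Φ) / (2 * σ1),
      Φ 1,
      (lam2 c1 c2 σ0 σ1 Φ ^ 2 - bF c2 σ1 Φ) / (2 * σ1 * lam2 c1 c2 σ0 σ1 Φ),
      Φ 1 / lam2 c1 c2 σ0 σ1 Φ]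

/-- Left eigenvector `l₄`. -/
def l4 (c1 c2 σ0 σ1 : ℝ) (Φ : Fin 4 → ℝ) : Fin 4 → ℝ :=
  (KF c1 c2 σ0 σ1 Φ)⁻¹ •
    ![(lam1 c1 c2 σ0 σ1 Φ ^ 2 - bF c2 σ1 Φ) / (2 * σ1),
      Φ 1,
      (lam1 c1 c2 σ0 σ1 Φ ^ 2 - bF c2 σ1 Φ) / (2 * σ1 * lam1 c1 c2 σ0 σ1 Φ),
      Φ 1 / lam1 c1 c2 σ0 σ1 Φ]

/-- Indexed eigenvalues `λᵢ`, `i = 1,…,4` realised as `i : Fin 4`. -/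
def lamI (c1 c2 σ0 σ1 : ℝ) (i : Fin 4) (Φ : Fin 4 → ℝ) : ℝ :=
  match i with
  | 0 => lam1 c1 c2 σ0 σ1 Φ
  | 1 => lam2 c1 c2 σ0 σ1 Φ
  | 2 => lam3 c1 c2 σ0 σ1 Φ
  | 3 => lam4 c1 c2 σ0 σ1 Φ

/-- Indexed right eigenvectors `rᵢ`. -/
def rI (c1 c2 σ0 σ1 : ℝ) (i : Fin 4) (Φ : Fin 4 → ℝ) : Fin 4 → ℝ :=
  match i with
  | 0 => r1 c1 c2 σ0 σ1 Φ
  | 1 => r2 c1 c2 σ0 σ1 Φ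
  | 2 => r3 c1 c2 σ0 σ1 Φ
  | 3 => r4 c1 c2 σ0 σ1 Φ

/-- Indexed left eigenvectors `lᵢ`. -/
def lI (c1 c2 σ0 σ1 : ℝ) (i : Fin 4) (Φ : Fin 4 → ℝ) : Fin 4 → ℝ :=
  match i with
  | 0 => l1 c1 c2 σ0 σ1 Φ
  | 1 => l2 c1 c2 σ0 σ1 Φ
  | 2 => l3 c1 c2 σ0 σ1 Φ
  | 3 => l4 c1 c2 σ0 σ1 Φ

/-- Jacobian matrix of a map `ℝ⁴ → ℝ⁴`. -/
def jac (f : (Fin 4 → ℝ) → (Fin 4 → ℝ)) (Φ : Fin 4 → ℝ) : Matrix (Fin 4) (Fin 4) ℝ :=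
  fun i j => fderiv ℝ (fun Ψ => f Ψ i) Φ (Pi.single j 1)

/-- `cⁱᵢₘ(Φ) = ∇λᵢ(Φ) · rₘ(Φ)`. -/
def cCo (c1 c2 σ0 σ1 : ℝ) (i m : Fin 4) (Φ : Fin 4 → ℝ) : ℝ :=
  fderiv ℝ (lamI c1 c2 σ0 σ1 i) Φ (rI c1 c2 σ0 σ1 m Φ)

/-- `γⁱᵢₘ(Φ) = -(λᵢ-λₘ) lᵢ · (Drᵢ rₘ - Drₘ rᵢ)`. -/
def gammaII (c1 c2 σ0 σ1 : ℝ) (i m : Fin 4) (Φ : Fin 4 → ℝ) : ℝ :=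
  -(lamI c1 c2 σ0 σ1 i Φ - lamI c1 c2 σ0 σ1 m Φ) *
    (lI c1 c2 σ0 σ1 i Φ ⬝ᵥ
      (jac (rI c1 c2 σ0 σ1 i) Φ *ᵥ rI c1 c2 σ0 σ1 m Φ -
        jac (rI c1 c2 σ0 σ1 m) Φ *ᵥ rI c1 c2 σ0 σ1 i Φ))

/-- `γⁱₖₘ(Φ) = -(λₖ-λₘ) lᵢ · (Drₖ rₘ)`. -/
def gammaKM (c1 c2 σ0 σ1 : ℝ) (i k m : Fin 4) (Φ : Fin 4 → ℝ) : ℝ :=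
  -(lamI c1 c2 σ0 σ1 k Φ - lamI c1 c2 σ0 σ1 m Φ) *
    (lI c1 c2 σ0 σ1 i Φ ⬝ᵥ (jac (rI c1 c2 σ0 σ1 k) Φ *ᵥ rI c1 c2 σ0 σ1 m Φ))


/-- Strict hyperbolicity: there is `κ > 0`, depending only on
`c1, c2, σ0, σ1`, such that for `|Φ| < 2κ` one has `a > b > 0`, `ab > c²`, each `λᵢ(Φ)` is a
(real) eigenvalue of `A(Φ)`, and `λ₄ < λ₃ < λ₂ < λ₁`; moreover `λ₁(0) = c1`, `λ₂(0) = c2`. -/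
lemma det_eq_aux (a b c l : ℝ) :
    Matrix.det (l • (1 : Matrix (Fin 4) (Fin 4) ℝ) -
      !![0,0,-1,0;0,0,0,-1;-a,-c,0,0;-c,-b,0,0]) =
    l^4 - (a+b)*l^2 + (a*b - c^2) := by
  have h : ((2:Fin 4).succAbove (2 : Fin 3)) = 3 := by decide
  have e : ((3:Fin 4):ℕ) = 3 := rfl
  simp [Matrix.det_succ_row_zero, Matrix.one_apply, Fin.sum_univ_succ, h, e]
  ring

lemma coord_le_eucNorm4 (Φ : Fin 4 → ℝ) (i : Fin 4) : |Φ i| ≤ eucNorm4 Φ := by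
  rw [eucNorm4, ← Real.sqrt_sq_eq_abs]
  apply Real.sqrt_le_sqrt
  exact Finset.single_le_sum (f := fun j => (Φ j)^2) (fun j _ => sq_nonneg _) (Finset.mem_univ i)

lemma hyp_scalars (s t δ u v w : ℝ) (hδ : 0 < δ) (hδ1 : δ ≤ t) (hδ2 : δ ≤ s - t)
    (hu : |u| ≤ δ/4) (hv : |v| ≤ δ/4) (hw : |w| ≤ δ/4) :
    t + v < s + u ∧ 0 < t + v ∧ w^2 < (s+u)*(t+v) := by
  obtain ⟨hu1, hu2⟩ := abs_le.mp hu
  obtain ⟨hv1, hv2⟩ := abs_le.mp hv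
  obtain ⟨hw1, hw2⟩ := abs_le.mp hw
  have h1 : t + v < s + u := by linarith
  have h2 : 3*δ/4 ≤ t + v := by linarith
  have h3 : 0 < t + v := by linarith
  refine ⟨h1, h3, ?_⟩
  have hw2' : w^2 ≤ (δ/4)^2 := sq_le_sq' hw1 hw2
  have h4 : (t+v)*(t+v) ≤ (s+u)*(t+v) := mul_le_mul_of_nonneg_right h1.le h3.le
  have h5 : (3*δ/4)*(3*δ/4) ≤ (t+v)*(t+v) :=
    mul_le_mul h2 h2 (by positivity) h3.le
  nlinarith [mul_pos hδ hδ]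

lemma hyp_delta (a b c : ℝ) (hab : b < a) (hb : 0 < b) (hcab : c^2 < a*b) :
    0 < (a-b)^2 + 4*c^2 ∧ (a-b)^2 + 4*c^2 < (a+b)^2 :=
  ⟨by nlinarith [sq_nonneg c], by nlinarith⟩

set_option maxHeartbeats 1000000 in
theorem strict_hyperbolicity (c1 c2 σ0 σ1 : ℝ) (hc2 : 0 < c2) (hc12 : c2 < c1) (hσ1 : σ1 ≠ 0) :
    ∃ κ > (0:ℝ),
      (∀ Φ : Fin 4 → ℝ, eucNorm4 Φ < 2 * κ →
        bF c2 σ1 Φ < aF c1 σ0 Φ ∧ 0 < bF c2 σ1 Φ ∧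
        cF σ1 Φ ^ 2 < aF c1 σ0 Φ * bF c2 σ1 Φ ∧
        (∀ i : Fin 4,
          Matrix.det (lamI c1 c2 σ0 σ1 i Φ • (1 : Matrix (Fin 4) (Fin 4) ℝ) -
            AM c1 c2 σ0 σ1 Φ) = 0) ∧
        lam4 c1 c2 σ0 σ1 Φ < lam3 c1 c2 σ0 σ1 Φ ∧
        lam3 c1 c2 σ0 σ1 Φ < lam2 c1 c2 σ0 σ1 Φ ∧
        lam2 c1 c2 σ0 σ1 Φ < lam1 c1 c2 σ0 σ1 Φ) ∧
      lam1 c1 c2 σ0 σ1 0 = c1 ∧ lam2 c1 c2 σ0 σ1 0 = c2 := by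
  obtain ⟨δ, hδdef⟩ : ∃ x : ℝ, x = min (c2^2) (c1^2 - c2^2) := ⟨_, rfl⟩
  obtain ⟨M, hMdef⟩ : ∃ x : ℝ, x = 2*(|σ0| + |σ1|) + 1 := ⟨_, rfl⟩
  have hM : 0 < M := by rw [hMdef]; positivity
  have hMne : M ≠ 0 := hM.ne'
  have hδ : 0 < δ := by
    rw [hδdef]; apply lt_min
    · positivity
    · nlinarith
  have hδ1 : δ ≤ c2^2 := hδdef ▸ min_le_left _ _
  have hδ2 : δ ≤ c1^2 - c2^2 := hδdef ▸ min_le_right _ _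
  refine ⟨δ/(8*M), by positivity, ?_, ?_, ?_⟩
  · intro Φ hΦ
    have h2κ : 2 * (δ/(8*M)) = δ/(4*M) := by field_simp; ring
    rw [h2κ] at hΦ
    -- coordinate bounds
    have key : ∀ (σ : ℝ) (i : Fin 4), |σ| ≤ |σ0| + |σ1| → |2 * σ * Φ i| ≤ δ/4 := by
      intro σ i hσ
      have h2 : |Φ i| < δ/(4*M) := lt_of_le_of_lt (coord_le_eucNorm4 Φ i) hΦ
      have h3 : |2 * σ * Φ i| = 2 * |σ| * |Φ i| := by
        rw [abs_mul, abs_mul]; norm_num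
      rw [h3]
      have hΦnn : (0:ℝ) ≤ |Φ i| := abs_nonneg _
      have h4 : 2 * |σ| * |Φ i| ≤ M * (δ/(4*M)) := by
        apply mul_le_mul
        · rw [hMdef]; linarith
        · exact le_of_lt h2
        · exact hΦnn
        · positivity
      have h5 : M * (δ/(4*M)) = δ/4 := by field_simp
      linarith [h5 ▸ h4]
    have hA := key σ0 0 (le_add_of_nonneg_right (abs_nonneg σ1))
    have hB := key σ1 0 (le_add_of_nonneg_left (abs_nonneg σ0))
    have hC := key σ1 1 (le_add_of_nonneg_left (abs_nonneg σ0))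
    clear key hΦ h2κ hMne hM hδdef hMdef
    set a := aF c1 σ0 Φ with hadef
    set b := bF c2 σ1 Φ with hbdef
    set c := cF σ1 Φ with hcdef
    set Δ := ΔF c1 c2 σ0 σ1 Φ with hΔdef
    set d := Real.sqrt Δ with hddef
    -- definitional facts (before making the let-values opaque)
    have hΔeq : Δ = (a-b)^2 + 4*c^2 := rfl
    have haeq : a = c1^2 + 2*σ0*Φ 0 := rfl
    have hbeq : b = c2^2 + 2*σ1*Φ 0 := rfl
    have hceq : c = 2*σ1*Φ 1 := rfl
    have hAM : AM c1 c2 σ0 σ1 Φ = !![0,0,-1,0;0,0,0,-1;-a,-c,0,0;-c,-b,0,0] := rfl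
    have hl1 : lam1 c1 c2 σ0 σ1 Φ = Real.sqrt ((a + b + d)/2) := rfl
    have hl2 : lam2 c1 c2 σ0 σ1 Φ = Real.sqrt ((a + b - d)/2) := rfl
    have hl3 : lam3 c1 c2 σ0 σ1 Φ = -lam2 c1 c2 σ0 σ1 Φ := rfl
    have hl4 : lam4 c1 c2 σ0 σ1 Φ = -lam1 c1 c2 σ0 σ1 Φ := rfl
    have hlamI0 : lamI c1 c2 σ0 σ1 0 Φ = lam1 c1 c2 σ0 σ1 Φ := rfl
    have hlamI1 : lamI c1 c2 σ0 σ1 1 Φ = lam2 c1 c2 σ0 σ1 Φ := rfl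
    have hlamI2 : lamI c1 c2 σ0 σ1 2 Φ = -lam2 c1 c2 σ0 σ1 Φ := rfl
    have hlamI3 : lamI c1 c2 σ0 σ1 3 Φ = -lam1 c1 c2 σ0 σ1 Φ := rfl
    clear_value a b c Δ d
    -- scalar inequalities via the auxiliary lemma
    obtain ⟨hab', hb', hcab'⟩ :=
      hyp_scalars (c1^2) (c2^2) δ (2*σ0*Φ 0) (2*σ1*Φ 0) (2*σ1*Φ 1) hδ hδ1 hδ2 hA hB hC
    have hab : b < a := by rw [haeq, hbeq]; exact hab'
    have hb : 0 < b := by rw [hbeq]; exact hb'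
    have hcab : c ^ 2 < a * b := by rw [haeq, hbeq, hceq]; exact hcab'
    clear hA hB hC hab' hb' hcab' haeq hbeq hceq hδ1 hδ2 hδ
    obtain ⟨hΔpos', hΔlt'⟩ := hyp_delta a b c hab hb hcab
    have hΔpos : 0 < Δ := hΔeq ▸ hΔpos'
    have hd : 0 < d := by rw [hddef]; exact Real.sqrt_pos.mpr hΔpos
    have hd2 : d^2 = Δ := by rw [hddef]; exact Real.sq_sqrt hΔpos.le
    have habpos : 0 < a + b := by linarith
    have hdlt : d < a + b := by
      have h1 : Δ < (a+b)^2 := hΔeq ▸ hΔlt'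
      rw [hddef]
      calc Real.sqrt Δ < Real.sqrt ((a+b)^2) := Real.sqrt_lt_sqrt hΔpos.le h1
        _ = a + b := Real.sqrt_sq habpos.le
    have harg2 : 0 < (a + b - d)/2 := by linarith
    have harg1 : 0 < (a + b + d)/2 := by linarith
    have hl2pos : 0 < lam2 c1 c2 σ0 σ1 Φ := by rw [hl2]; exact Real.sqrt_pos.mpr harg2
    have hl21 : lam2 c1 c2 σ0 σ1 Φ < lam1 c1 c2 σ0 σ1 Φ := by
      rw [hl1, hl2]
      exact Real.sqrt_lt_sqrt harg2.le (by linarith)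
    refine ⟨hab, hb, hcab, ?_, ?_, ?_, hl21⟩
    · -- determinant
      intro i
      have hdval : d^2 = (a-b)^2 + 4*c^2 := by rw [hd2, hΔeq]
      have key4 : ∀ l : ℝ, (l^2 = (a+b+d)/2 ∨ l^2 = (a+b-d)/2) →
          l^4 - (a+b)*l^2 + (a*b - c^2) = 0 := by
        intro l hl
        rw [show l^4 - (a+b)*l^2 + (a*b - c^2)
            = (l^2)^2 - (a+b)*(l^2) + (a*b - c^2) by ring]
        rcases hl with h | h <;> rw [h] <;> linear_combination (1/4)*hdval
      have e1 : (lam1 c1 c2 σ0 σ1 Φ)^2 = (a+b+d)/2 := by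
        rw [hl1]; exact Real.sq_sqrt harg1.le
      have e2 : (lam2 c1 c2 σ0 σ1 Φ)^2 = (a+b-d)/2 := by
        rw [hl2]; exact Real.sq_sqrt harg2.le
      rw [hAM, det_eq_aux]
      fin_cases i
      · exact key4 (lam1 c1 c2 σ0 σ1 Φ) (Or.inl e1)
      · exact key4 (lam2 c1 c2 σ0 σ1 Φ) (Or.inr e2)
      · exact key4 (-(lam2 c1 c2 σ0 σ1 Φ)) (Or.inr ((neg_sq _).trans e2))
      · exact key4 (-(lam1 c1 c2 σ0 σ1 Φ)) (Or.inl ((neg_sq _).trans e1))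
    · rw [hl4, hl3]; linarith
    · rw [hl3]; linarith
  · -- lam1 at 0
    have hΔ0 : ΔF c1 c2 σ0 σ1 0 = (c1^2 - c2^2)^2 := by
      simp [ΔF, aF, bF, cF]
    rw [lam1, hΔ0, Real.sqrt_sq (by nlinarith)]
    simp only [aF, bF, Pi.zero_apply]
    rw [show (c1^2 + 2*σ0*0 + (c2^2 + 2*σ1*0) + (c1^2 - c2^2))/2 = c1^2 by ring]
    exact Real.sqrt_sq (by linarith)
  · have hΔ0 : ΔF c1 c2 σ0 σ1 0 = (c1^2 - c2^2)^2 := by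
      simp [ΔF, aF, bF, cF]
    rw [lam2, hΔ0, Real.sqrt_sq (by nlinarith)]
    simp only [aF, bF, Pi.zero_apply]
    rw [show (c1^2 + 2*σ0*0 + (c2^2 + 2*σ1*0) - (c1^2 - c2^2))/2 = c2^2 by ring]
    exact Real.sqrt_sq (by linarith)

end ElasticIP
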